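/- Let M be a Riemannian symmetric space, x̄ ∈ M, and let π(x) ∝ exp(−(d²(y,x) + d²(x,z))/(2σ²)) be the posterior density with equal likelihood and prior variances. If x̂ is the midpoint of the geodesic from z to y, then the geodesic symmetry s at x̂ leaves π invariant (it swaps y and z), and consequently the Riemannian barycentre of π equals x̂, i.e. the MMS estimator coincides with the MAP estimator when σ² = τ². -/

import Mathlib

open MeasureTheory

/-- Equality of the MAP and MMS estimators when `σ² = τ²`.  `M` is a Riemannian symmetric
space of non-compact type (hence Hadamard), abstracted by its metric measure structure:
`vol` is the Riemannian volume (preserved by the isometry `s`), and `s` is the geodesic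
symmetry at the midpoint `xhat` of the geodesic from `z` to `y`: it is an isometry which
swaps `y` and `z` and has `xhat` as its unique fixed point.  Let
`π ∝ exp(−(d²(y,x)+d²(x,z))/(2σ²)) vol(dx)` be the posterior with equal likelihood and
prior variances, and let `b` be its (unique) Riemannian barycentre.  Then `s` leaves `π`
invariant, and consequently `b = xhat`, i.e. the MMS estimator coincides with the MAP
estimator. -/
theorem stmt14 {M : Type*} [MetricSpace M] [MeasurableSpace M] [BorelSpace M]
    (vol : Measure M) (σ : ℝ) (hσ : 0 < σ) (y z xhat : M)
    (s : M ≃ᵢ M) (hsvol : Measure.map (⇑s) vol = vol)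
    (hsy : s y = z) (hsz : s z = y)
    (hfix : ∀ w : M, s w = w ↔ w = xhat)
    (π : Measure M)
    (hπ : π = vol.withDensity fun w =>
      ENNReal.ofReal (Real.exp (-(dist y w ^ 2 + dist w z ^ 2) / (2 * σ ^ 2))))
    (hvar : ∀ w : M, Integrable (fun u => dist w u ^ 2) π)
    (b : M)
    (hb : ∀ w : M, (∫ u, dist b u ^ 2 ∂π) ≤ ∫ u, dist w u ^ 2 ∂π)
    (hb_unique : ∀ b' : M,
      (∀ w : M, (∫ u, dist b' u ^ 2 ∂π) ≤ ∫ u, dist w u ^ 2 ∂π) → b' = b) :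
    Measure.map (⇑s) π = π ∧ b = xhat := by
  set f : M → ENNReal := fun w =>
    ENNReal.ofReal (Real.exp (-(dist y w ^ 2 + dist w z ^ 2) / (2 * σ ^ 2))) with hf
  have hsm : Measurable (⇑s) := s.continuous.measurable
  have hfc : Continuous f := by
    apply ENNReal.continuous_ofReal.comp
    apply Real.continuous_exp.comp
    fun_prop
  have hfm : Measurable f := hfc.measurable
  -- f is invariant under s.symm
  have hfsymm : ∀ w, f (s.symm w) = f w := by
    intro w
    have h1 : dist y (s.symm w) = dist z w := by
      have := s.isometry.dist_eq y (s.symm w)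
      rw [s.apply_symm_apply, hsy] at this
      linarith [this]
    have h2 : dist (s.symm w) z = dist w y := by
      have := s.isometry.dist_eq (s.symm w) z
      rw [s.apply_symm_apply, hsz] at this
      linarith [this]
    simp only [hf, h1, h2, dist_comm z w, dist_comm w y]
    ring_nf
  have hmap : Measure.map (⇑s) π = π := by
    rw [hπ]
    ext A hA
    rw [Measure.map_apply hsm hA, withDensity_apply _ (hsm hA), withDensity_apply _ hA]
    calc ∫⁻ a in s ⁻¹' A, f a ∂vol
        = ∫⁻ a in s ⁻¹' A, f (s.symm (s a)) ∂vol := by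
          simp only [s.symm_apply_apply]
      _ = ∫⁻ a in A, f (s.symm a) ∂(Measure.map (⇑s) vol) :=
          (setLIntegral_map hA (hfm.comp s.symm.continuous.measurable) hsm).symm
      _ = ∫⁻ a in A, f a ∂vol := by
          rw [hsvol]
          exact setLIntegral_congr_fun hA (fun a _ => hfsymm a)
  refine ⟨hmap, ?_⟩
  have hint : ∀ w u : M, dist (s w) (s u) = dist w u := fun w u => s.isometry.dist_eq w u
  have hsb : ∀ w : M, (∫ u, dist (s b) u ^ 2 ∂π) ≤ ∫ u, dist w u ^ 2 ∂π := by
    intro w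
    have : (∫ u, dist (s b) u ^ 2 ∂π) = ∫ u, dist b u ^ 2 ∂π := by
      conv_lhs => rw [← hmap]
      rw [integral_map hsm.aemeasurable]
      · simp only [hint]
      · exact (continuous_const.dist continuous_id).pow 2 |>.aestronglyMeasurable
    rw [this]
    exact hb w
  have : (s b : M) = b := hb_unique (s b) hsb
  exact (hfix b).mp this
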